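/- There exists a constant C > 0 such that for all integers m, n with 2 ≤ m ≤ n, every configuration A of the m × n Torus Puzzle in which every column is body-full, and every finite set 𝒞 of column indices with |𝒞| · (m − 1) ≤ n, there is a finite sequence of at most C · (n + |𝒞| · m) · ⌈log₂ m⌉ unit rotations whose application to A produces a configuration A' such that every column with index in 𝒞 is body-sorted in A', and for every column index j ∉ 𝒞 and every row index i with 1 ≤ i ≤ m − 1 one has A'(i, j) = A(i, j). -/

import Mathlib

/- Unit rightward rotation of row i of the m x n Torus Puzzle. -/
def rowRot (m n : ℕ) (i : Fin m) : Equiv.Perm (Fin m × Fin n) where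
  toFun p := if p.1 = i then (i, finRotate n p.2) else p
  invFun p := if p.1 = i then (i, (finRotate n).symm p.2) else p
  left_inv := by rintro ⟨a, b⟩; by_cases h : a = i <;> simp only [h, ↓reduceIte, if_true, if_false, Equiv.symm_apply_apply, Equiv.apply_symm_apply]
  right_inv := by rintro ⟨a, b⟩; by_cases h : a = i <;> simp only [h, ↓reduceIte, if_true, if_false, Equiv.symm_apply_apply, Equiv.apply_symm_apply]

/- Unit downward rotation of column j of the m x n Torus Puzzle. -/
def colRot (m n : ℕ) (j : Fin n) : Equiv.Perm (Fin m × Fin n) where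
  toFun p := if p.2 = j then (finRotate m p.1, j) else p
  invFun p := if p.2 = j then ((finRotate m).symm p.1, j) else p
  left_inv := by rintro ⟨a, b⟩; by_cases h : b = j <;> simp only [h, ↓reduceIte, if_true, if_false, Equiv.symm_apply_apply, Equiv.apply_symm_apply]
  right_inv := by rintro ⟨a, b⟩; by_cases h : b = j <;> simp only [h, ↓reduceIte, if_true, if_false, Equiv.symm_apply_apply, Equiv.apply_symm_apply]

/- The set S(m,n) of the m + n unit rotations. -/
def unitRotations (m n : ℕ) : Set (Equiv.Perm (Fin m × Fin n)) :=
  Set.range (rowRot m n) ∪ Set.range (colRot m n)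

/- Applying a unit rotation g to a configuration A yields A ∘ g⁻¹. -/
def applyRot {m n : ℕ} (A : (Fin m × Fin n) ≃ Fin (m * n))
    (g : Equiv.Perm (Fin m × Fin n)) : (Fin m × Fin n) ≃ Fin (m * n) :=
  g.symm.trans A

/- Applying a finite sequence of rotations, one after another (left to right). -/
def applySeq {m n : ℕ} (A : (Fin m × Fin n) ≃ Fin (m * n))
    (L : List (Equiv.Perm (Fin m × Fin n))) : (Fin m × Fin n) ≃ Fin (m * n) :=
  L.foldl applyRot A

/- Column j is near-full: every element in the body of column j has target column j. -/
def NearFull {m n : ℕ} (A : (Fin m × Fin n) ≃ Fin (m * n)) (j : Fin n) : Prop :=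
  ∀ i : Fin m, 1 ≤ (i : ℕ) → (A (i, j) : ℕ) % n = (j : ℕ)

/- The body of column j contains exactly the elements with target column j and target row ≥ 1. -/
def BodyOfColumnIsFull {m n : ℕ} (A : (Fin m × Fin n) ≃ Fin (m * n)) (j : Fin n) : Prop :=
  ∀ v : Fin (m * n),
    (∃ i : Fin m, 1 ≤ (i : ℕ) ∧ A (i, j) = v) ↔ ((v : ℕ) % n = (j : ℕ) ∧ 1 ≤ (v : ℕ) / n)

/- Column j is body-sorted: every element of the body of column j is in its target position. -/
def BodySorted {m n : ℕ} (A : (Fin m × Fin n) ≃ Fin (m * n)) (j : Fin n) : Prop :=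
  ∀ i : Fin m, 1 ≤ (i : ℕ) → (A (i, j) : ℕ) = (i : ℕ) * n + (j : ℕ)

namespace Torus

open Fin.CommRing

variable {α : Type*}

def netPerm (L : List (Equiv.Perm α)) : Equiv.Perm α := L.foldl (fun s g => g * s) 1

@[simp] lemma netPerm_nil : netPerm ([] : List (Equiv.Perm α)) = 1 := rfl

lemma netPerm_foldl (s : Equiv.Perm α) (L : List (Equiv.Perm α)) :
    L.foldl (fun s g => g * s) s = netPerm L * s := by
  induction L generalizing s with
  | nil => simp [netPerm]
  | cons a L ih =>
      simp only [List.foldl_cons, netPerm, ih (a * s), ih (a * 1)]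
      group

lemma netPerm_cons (g : Equiv.Perm α) (L : List (Equiv.Perm α)) :
    netPerm (g :: L) = netPerm L * g := by
  show (g :: L).foldl (fun s g => g * s) 1 = _
  rw [List.foldl_cons, netPerm_foldl]; group

@[simp] lemma netPerm_singleton (g : Equiv.Perm α) : netPerm [g] = g := by
  simp [netPerm_cons]

lemma netPerm_append (L1 L2 : List (Equiv.Perm α)) :
    netPerm (L1 ++ L2) = netPerm L2 * netPerm L1 := by
  show (L1 ++ L2).foldl (fun s g => g * s) 1 = _
  rw [List.foldl_append, netPerm_foldl, netPerm_foldl]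
  rfl

lemma applySeq_apply {m n : ℕ} (A : (Fin m × Fin n) ≃ Fin (m * n))
    (L : List (Equiv.Perm (Fin m × Fin n))) (p : Fin m × Fin n) :
    applySeq A L p = A ((netPerm L)⁻¹ p) := by
  induction L generalizing A with
  | nil => simp [applySeq]
  | cons g L ih =>
      show applySeq (applyRot A g) L p = _
      rw [ih, netPerm_cons]
      simp [applyRot, mul_inv_rev, Equiv.Perm.inv_def]

lemma applySeq_append {m n : ℕ} (A : (Fin m × Fin n) ≃ Fin (m * n))
    (L1 L2 : List (Equiv.Perm (Fin m × Fin n))) :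
    applySeq A (L1 ++ L2) = applySeq (applySeq A L1) L2 := by
  simp [applySeq, List.foldl_append]

lemma netPerm_flatMap (W : ℕ → List (Equiv.Perm α)) (T : ℕ) (p : α) (f : ℕ → α)
    (h0 : f 0 = p) (hs : ∀ t < T, netPerm (W t) (f t) = f (t + 1)) :
    netPerm ((List.range T).flatMap W) p = f T := by
  induction T with
  | zero => simpa using h0.symm
  | succ T ih =>
      rw [List.range_succ, List.flatMap_append, netPerm_append]
      have h1 : netPerm ((List.range T).flatMap W) p = f T :=
        ih (fun t ht => hs t (by omega))
      simp only [Equiv.Perm.mul_apply, h1]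
      simpa using hs T (by omega)

lemma finRotate_apply' {k : ℕ} [NeZero k] (b : Fin k) : finRotate k b = b + 1 := by
  rcases k with _ | k
  · exact absurd rfl (NeZero.ne 0)
  · exact finRotate_succ_apply b

lemma rowRot_apply {m n : ℕ} (i : Fin m) (p : Fin m × Fin n) :
    rowRot m n i p = if p.1 = i then (i, finRotate n p.2) else p := rfl

lemma colRot_apply {m n : ℕ} (j : Fin n) (p : Fin m × Fin n) :
    colRot m n j p = if p.2 = j then (finRotate m p.1, j) else p := rfl

section Pass

open Finset

/-- rank of column j among the chosen columns -/
def cidx {n : ℕ} (C : Finset (Fin n)) (j : Fin n) : ℕ := (C.filter (fun x => x < j)).card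

/-- right end of the slot arc of column j -/
def rNat (m : ℕ) {n : ℕ} (C : Finset (Fin n)) (j : Fin n) : ℕ := cidx C j * (m - 1) + (m - 2)

/-- tick offset of column j's sweep window -/
def oj (m n : ℕ) (C : Finset (Fin n)) (j : Fin n) : ℕ := ((j : ℕ) + (n - rNat m C j)) % n

/-- whether column j performs a downward rotation at tick t -/
def fires (m n : ℕ) (C : Finset (Fin n)) (mu : Fin n → ℕ → Bool) (j : Fin n) (t : ℕ) : Prop :=
  j ∈ C ∧ ∃ s < m - 1,
    (t = oj m n C j + s ∨
     (t = 2 * n + oj m n C j + s ∧ mu j (m - 1 - s) = true) ∨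
     (t = 4 * n + oj m n C j + s ∧ mu j (m - 1 - s) = false))

open Classical in
noncomputable def fireF (m n : ℕ) (C : Finset (Fin n)) (mu : Fin n → ℕ → Bool) (t : ℕ) :
    Finset (Fin n) :=
  C.filter (fun j => fires m n C mu j t)

noncomputable def tickWord (m n : ℕ) [NeZero m] (C : Finset (Fin n)) (mu : Fin n → ℕ → Bool)
    (t : ℕ) : List (Equiv.Perm (Fin m × Fin n)) :=
  ((fireF m n C mu t).toList.map (colRot m n)) ++ [rowRot m n 0]

noncomputable def passWord (m n : ℕ) [NeZero m] (C : Finset (Fin n)) (mu : Fin n → ℕ → Bool) :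
    List (Equiv.Perm (Fin m × Fin n)) :=
  (List.range (6 * n)).flatMap (tickWord m n C mu)

variable {m n : ℕ} {C : Finset (Fin n)} {mu : Fin n → ℕ → Bool}

lemma mem_fireF {j : Fin n} {t : ℕ} : j ∈ fireF m n C mu t ↔ fires m n C mu j t := by
  classical
  simp only [fireF, mem_filter]
  exact ⟨fun h => h.2, fun h => ⟨h.1, h⟩⟩

lemma fires_lb {j : Fin n} {t : ℕ} (h : fires m n C mu j t) : oj m n C j ≤ t := by
  obtain ⟨-, s, -, h⟩ := h
  rcases h with h | ⟨h, -⟩ | ⟨h, -⟩ <;> omega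

lemma fires_mem {j : Fin n} {t : ℕ} (h : fires m n C mu j t) : j ∈ C := h.1

lemma fires_sweep1 {j : Fin n} (hj : j ∈ C) {s : ℕ} (hs : s < m - 1) :
    fires m n C mu j (oj m n C j + s) := ⟨hj, s, hs, Or.inl rfl⟩

lemma fires_sweep2 {j : Fin n} (hj : j ∈ C) {s : ℕ} (hs : s < m - 1)
    (h : mu j (m - 1 - s) = true) :
    fires m n C mu j (2 * n + oj m n C j + s) := ⟨hj, s, hs, Or.inr (Or.inl ⟨rfl, h⟩)⟩

lemma fires_sweep3 {j : Fin n} (hj : j ∈ C) {s : ℕ} (hs : s < m - 1)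
    (h : mu j (m - 1 - s) = false) :
    fires m n C mu j (4 * n + oj m n C j + s) := ⟨hj, s, hs, Or.inr (Or.inr ⟨rfl, h⟩)⟩

/-- membership of the pass word in the generating set -/
lemma passWord_mem [NeZero m] {g : Equiv.Perm (Fin m × Fin n)} (hg : g ∈ passWord m n C mu) :
    g ∈ unitRotations m n := by
  rw [passWord, List.mem_flatMap] at hg
  obtain ⟨t, -, hg⟩ := hg
  rw [tickWord, List.mem_append] at hg
  rcases hg with hg | hg
  · rw [List.mem_map] at hg
    obtain ⟨j, -, rfl⟩ := hg
    exact Or.inr ⟨j, rfl⟩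
  · rw [List.mem_singleton] at hg
    subst hg
    exact Or.inl ⟨0, rfl⟩

open Classical in
lemma card_fires_le (hm : 2 ≤ m) (j : Fin n) :
    ((Finset.range (6 * n)).filter (fun t => fires m n C mu j t)).card ≤ 3 * (m - 1) := by
  classical
  have hsub : (Finset.range (6 * n)).filter (fun t => fires m n C mu j t) ⊆
      ((Finset.range (m - 1)).image (fun s => oj m n C j + s)) ∪
      ((Finset.range (m - 1)).image (fun s => 2 * n + oj m n C j + s)) ∪
      ((Finset.range (m - 1)).image (fun s => 4 * n + oj m n C j + s)) := by
    intro t ht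
    rw [mem_filter] at ht
    obtain ⟨-, s, hs, hc⟩ := ht.2
    simp only [mem_union, mem_image, mem_range]
    rcases hc with h | ⟨h, -⟩ | ⟨h, -⟩
    · exact Or.inl (Or.inl ⟨s, hs, h.symm⟩)
    · exact Or.inl (Or.inr ⟨s, hs, h.symm⟩)
    · exact Or.inr ⟨s, hs, h.symm⟩
  calc ((Finset.range (6 * n)).filter (fun t => fires m n C mu j t)).card
      ≤ _ := Finset.card_le_card hsub
    _ ≤ 3 * (m - 1) := by
        refine le_trans (Finset.card_union_le _ _) ?_
        refine le_trans (Nat.add_le_add (Finset.card_union_le _ _) le_rfl) ?_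
        have h1 := Finset.card_image_le (s := Finset.range (m - 1)) (f := fun s => oj m n C j + s)
        have h2 := Finset.card_image_le (s := Finset.range (m - 1)) (f := fun s => 2 * n + oj m n C j + s)
        have h3 := Finset.card_image_le (s := Finset.range (m - 1)) (f := fun s => 4 * n + oj m n C j + s)
        simp only [Finset.card_range] at h1 h2 h3
        omega

open Classical in
lemma passWord_length [NeZero m] (hm : 2 ≤ m) :
    (passWord m n C mu).length ≤ 6 * n + C.card * (3 * m) := by
  classical
  have key : ∀ T : ℕ, ((List.range T).flatMap (tickWord m n C mu)).length
      = T + ∑ t ∈ Finset.range T, (fireF m n C mu t).card := by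
    intro T
    induction T with
    | zero => simp
    | succ T ih =>
        rw [List.range_succ, List.flatMap_append, List.length_append, ih,
          Finset.sum_range_succ]
        simp [tickWord]
        omega
  rw [passWord, key]
  have hswap : ∑ t ∈ Finset.range (6 * n), (fireF m n C mu t).card
      = ∑ j ∈ C, ((Finset.range (6 * n)).filter (fun t => fires m n C mu j t)).card := by
    simp only [fireF, Finset.card_filter]
    rw [Finset.sum_comm]
  have hle : ∑ j ∈ C, ((Finset.range (6 * n)).filter (fun t => fires m n C mu j t)).card
      ≤ C.card * (3 * (m - 1)) := by
    have h := Finset.sum_le_sum (s := C)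
      (f := fun j => ((Finset.range (6 * n)).filter (fun t => fires m n C mu j t)).card)
      (g := fun _ => 3 * (m - 1)) (fun j _ => card_fires_le hm j)
    simpa [Finset.sum_const, smul_eq_mul] using h
  have : C.card * (3 * (m - 1)) ≤ C.card * (3 * m) :=
    Nat.mul_le_mul_left _ (by omega)
  omega

lemma netPerm_colRot_list (L : List (Fin n)) (hL : L.Nodup) (i : Fin m) (j : Fin n) :
    netPerm (L.map (colRot m n)) (i, j) = if j ∈ L then (finRotate m i, j) else (i, j) := by
  induction L generalizing i with
  | nil => simp
  | cons a L ih =>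
      rw [List.map_cons, netPerm_cons]
      have hnd := (List.nodup_cons.mp hL)
      by_cases hja : j = a
      · subst hja
        have h1 : colRot m n j (i, j) = (finRotate m i, j) := by
          rw [colRot_apply]; simp
        simp only [Equiv.Perm.mul_apply, h1, ih hnd.2]
        simp [hnd.1]
      · have h1 : colRot m n a (i, j) = (i, j) := by
          rw [colRot_apply]; simp [hja]
        simp only [Equiv.Perm.mul_apply, h1, ih hnd.2]
        simp [hja]

lemma tickPerm_eq_pos [NeZero m] (t : ℕ) (i : Fin m) (j : Fin n)
    (hf : fires m n C mu j t) :
    netPerm (tickWord m n C mu t) (i, j) = (rowRot m n 0) (finRotate m i, j) := by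
  rw [tickWord, netPerm_append, netPerm_singleton]
  simp only [Equiv.Perm.mul_apply]
  rw [netPerm_colRot_list _ (Finset.nodup_toList _),
    if_pos (Finset.mem_toList.mpr (mem_fireF.mpr hf))]

lemma tickPerm_eq_neg [NeZero m] (t : ℕ) (i : Fin m) (j : Fin n)
    (hf : ¬ fires m n C mu j t) :
    netPerm (tickWord m n C mu t) (i, j) = (rowRot m n 0) (i, j) := by
  rw [tickWord, netPerm_append, netPerm_singleton]
  simp only [Equiv.Perm.mul_apply]
  rw [netPerm_colRot_list _ (Finset.nodup_toList _), if_neg]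
  rw [Finset.mem_toList]
  exact fun h => hf (mem_fireF.mp h)

lemma tick_fix [NeZero m] [NeZero n] {t : ℕ} {i : Fin m} {j : Fin n}
    (hf : ¬ fires m n C mu j t) (hi : i ≠ 0) :
    netPerm (tickWord m n C mu t) (i, j) = (i, j) := by
  rw [tickPerm_eq_neg _ _ _ hf, rowRot_apply, if_neg]
  exact hi

lemma tick_ride [NeZero m] [NeZero n] {t : ℕ} {j : Fin n}
    (hf : ¬ fires m n C mu j t) :
    netPerm (tickWord m n C mu t) ((0 : Fin m), j) = (0, j + 1) := by
  rw [tickPerm_eq_neg _ _ _ hf, rowRot_apply, if_pos rfl, finRotate_apply']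

lemma tick_down [NeZero m] [NeZero n] {t : ℕ} {r : ℕ} {j : Fin n}
    (hf : fires m n C mu j t) (hr : r + 1 < m) :
    netPerm (tickWord m n C mu t) ((↑r : Fin m), j) = ((↑(r + 1) : Fin m), j) := by
  rw [tickPerm_eq_pos _ _ _ hf, finRotate_apply', rowRot_apply, if_neg]
  · push_cast; rfl
  · show ¬((↑r : Fin m) + 1 = 0)
    have : ((↑r : Fin m) + 1) = (↑(r + 1) : Fin m) := by push_cast; rfl
    rw [this]
    intro h
    have := congrArg Fin.val h
    rw [Fin.val_natCast, Nat.mod_eq_of_lt hr] at this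
    simp at this

lemma tick_wrap [NeZero m] [NeZero n] {t : ℕ} {j : Fin n}
    (hf : fires m n C mu j t) :
    netPerm (tickWord m n C mu t) ((↑(m - 1) : Fin m), j) = (0, j + 1) := by
  rw [tickPerm_eq_pos _ _ _ hf, finRotate_apply', rowRot_apply]
  have hm1 : 1 ≤ m := Nat.one_le_iff_ne_zero.mpr (NeZero.ne m)
  have : ((↑(m - 1) : Fin m) + 1) = (0 : Fin m) := by
    have : ((↑(m - 1) : Fin m) + 1) = (↑(m - 1 + 1) : Fin m) := by push_cast; rfl
    rw [this]
    have h2 : m - 1 + 1 = m := by omega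
    rw [h2, Fin.natCast_self]
  rw [this, if_pos rfl, finRotate_apply']

lemma cidx_lt_card {j : Fin n} (hj : j ∈ C) : cidx C j < C.card := by
  classical
  exact Finset.card_lt_card ((Finset.filter_ssubset).mpr ⟨j, hj, lt_irrefl j⟩)

lemma cidx_inj {j j' : Fin n} (hj : j ∈ C) (hj' : j' ∈ C) (h : cidx C j = cidx C j') :
    j = j' := by
  classical
  by_contra hne
  have key : ∀ a b : Fin n, a ∈ C → b ∈ C → a < b → cidx C a < cidx C b := by
    intro a b ha hb hab
    apply Finset.card_lt_card
    rw [Finset.ssubset_iff_of_subset]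
    · exact ⟨a, by simp only [Finset.mem_filter]; exact ⟨ha, hab⟩,
        by simp only [Finset.mem_filter]; exact fun h => absurd h.2 (lt_irrefl a)⟩
    · intro x hx
      simp only [Finset.mem_filter] at hx ⊢
      exact ⟨hx.1, lt_trans hx.2 hab⟩
  rcases lt_trichotomy j j' with hl | hl | hl
  · exact absurd h (Nat.ne_of_lt (key j j' hj hj' hl))
  · exact hne hl
  · exact absurd h.symm (Nat.ne_of_lt (key j' j hj' hj hl))

lemma rNat_lt (hm : 2 ≤ m) (hC : C.card * (m - 1) ≤ n) {j : Fin n} (hj : j ∈ C) :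
    rNat m C j < n := by
  have h1 : cidx C j < C.card := cidx_lt_card hj
  have h2 : (cidx C j + 1) * (m - 1) ≤ C.card * (m - 1) :=
    Nat.mul_le_mul_right _ (by omega)
  rw [Nat.succ_mul] at h2
  rw [rNat]
  omega

lemma oj_lt (hn : 0 < n) {j : Fin n} : oj m n C j < n := Nat.mod_lt _ hn

lemma natCast_mod_self {k : ℕ} [NeZero k] (a : ℕ) : ((a % k : ℕ) : Fin k) = (a : Fin k) := by
  conv_rhs => rw [← Nat.div_add_mod a k]
  push_cast [Fin.natCast_self]
  ring

lemma oj_cast [NeZero n] (hm : 2 ≤ m) (hC : C.card * (m - 1) ≤ n) {j : Fin n} (hj : j ∈ C) :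
    ((oj m n C j : ℕ) : Fin n) = j - ((rNat m C j : ℕ) : Fin n) := by
  rw [oj, natCast_mod_self, Nat.cast_add, Nat.cast_sub (le_of_lt (rNat_lt hm hC hj))]
  rw [Fin.natCast_self, Fin.cast_val_eq_self]
  ring

lemma no_fire_riding [NeZero n] (hm : 2 ≤ m) (hmn : m ≤ n) (hC : C.card * (m - 1) ≤ n)
    {j : Fin n} (hj : j ∈ C) {i0 t : ℕ} (h1 : 1 ≤ i0) (h2 : i0 ≤ m - 1)
    (ht1 : oj m n C j + (m - 1 - i0) < t)
    (ht2 : t < oj m n C j + (m - 1 - i0) + (if mu j i0 then 2 * n else 4 * n))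
    (hf : fires m n C mu (j + ((t - (oj m n C j + (m - 1 - i0)) : ℕ) : Fin n)) t) :
    False := by
  have hn : 0 < n := by omega
  obtain ⟨hj', s, hs, hcase⟩ := hf
  set j' := j + ((t - (oj m n C j + (m - 1 - i0)) : ℕ) : Fin n) with hj'def
  have hr := rNat_lt hm hC hj
  have hr' := rNat_lt hm hC hj'
  have hsr' : s ≤ rNat m C j' := by rw [rNat]; omega
  have hkr : m - 1 - i0 ≤ rNat m C j := by rw [rNat]; omega
  -- the slot equation
  have hcast : ((t : ℕ) : Fin n) = ((oj m n C j' : ℕ) : Fin n) + ((s : ℕ) : Fin n) := by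
    rcases hcase with h | ⟨h, -⟩ | ⟨h, -⟩ <;>
      (rw [h]; push_cast [Fin.natCast_self]; ring)
  have hts_le : oj m n C j + (m - 1 - i0) ≤ t := by omega
  have hcast2 : ((t : ℕ) : Fin n)
      = ((oj m n C j : ℕ) : Fin n) + ((m - 1 - i0 : ℕ) : Fin n) + (j' - j) := by
    have e1 : t = (oj m n C j + (m - 1 - i0)) + (t - (oj m n C j + (m - 1 - i0))) := by omega
    have e2 : j' - j = ((t - (oj m n C j + (m - 1 - i0)) : ℕ) : Fin n) := by
      rw [hj'def]; exact add_sub_cancel_left j _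
    rw [e2]
    conv_lhs => rw [e1]
    push_cast
    ring
  have hoj := oj_cast (C := C) hm hC hj
  have hoj' := oj_cast (C := C) hm hC hj'
  have key : ((rNat m C j' - s : ℕ) : Fin n) = ((rNat m C j - (m - 1 - i0) : ℕ) : Fin n) := by
    rw [Nat.cast_sub hsr', Nat.cast_sub hkr]
    have := hcast.symm.trans hcast2
    rw [hoj, hoj'] at this
    linear_combination (-1 : Fin n) * this
  have keyN : rNat m C j' - s = rNat m C j - (m - 1 - i0) := by
    have hv := congrArg Fin.val key
    rwa [Fin.val_natCast, Fin.val_natCast, Nat.mod_eq_of_lt (by omega),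
      Nat.mod_eq_of_lt (by omega)] at hv
  -- arcs intersect, so the column indices agree
  have hcc : cidx C j = cidx C j' := by
    rcases lt_trichotomy (cidx C j) (cidx C j') with hl | hl | hl
    · exfalso
      have h3 : (cidx C j + 1) * (m - 1) ≤ cidx C j' * (m - 1) :=
        Nat.mul_le_mul_right _ (by omega)
      rw [Nat.succ_mul] at h3
      rw [rNat, rNat] at keyN
      omega
    · exact hl
    · exfalso
      have h3 : (cidx C j' + 1) * (m - 1) ≤ cidx C j * (m - 1) :=
        Nat.mul_le_mul_right _ (by omega)
      rw [Nat.succ_mul] at h3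
      rw [rNat, rNat] at keyN
      omega
  have hjj : j = j' := cidx_inj hj hj' hcc
  have hrr : rNat m C j' = rNat m C j := by rw [hjj]
  have hss : s = m - 1 - i0 := by rw [hrr] at keyN; omega
  have hoo : oj m n C j' = oj m n C j := by rw [hjj]
  have hmu_eq : m - 1 - s = i0 := by omega
  rcases hcase with h | ⟨h, hmu⟩ | ⟨h, hmu⟩
  · omega
  · rw [hmu_eq, ← hjj] at hmu
    rw [hmu] at ht2
    simp at ht2
    omega
  · rw [hmu_eq, ← hjj] at hmu
    rw [hmu] at ht2
    simp at ht2
    omega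

end Pass

section StablePartition

open Finset

/-- number of 0-marked body rows -/
def zbn (m : ℕ) (μ : ℕ → Bool) : ℕ := ((Finset.Ico 1 m).filter (fun x => μ x = false)).card

/-- target row of the item at body row i under the stable partition by μ (zeros first) -/
def spN (m : ℕ) (μ : ℕ → Bool) (i : ℕ) : ℕ :=
  if i = 0 then 0
  else if μ i then 1 + zbn m μ + ((Finset.Ico 1 i).filter (fun x => μ x = true)).card
  else 1 + ((Finset.Ico 1 i).filter (fun x => μ x = false)).card

variable {m : ℕ} {μ : ℕ → Bool}

@[simp] lemma spN_zero : spN m μ 0 = 0 := rfl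

lemma spN_true_eq {i : ℕ} (h : 1 ≤ i) (ht : μ i = true) :
    spN m μ i = 1 + zbn m μ + ((Finset.Ico 1 i).filter (fun x => μ x = true)).card := by
  rw [spN, if_neg (by omega), if_pos ht]

lemma spN_false_eq {i : ℕ} (h : 1 ≤ i) (hf : μ i = false) :
    spN m μ i = 1 + ((Finset.Ico 1 i).filter (fun x => μ x = false)).card := by
  rw [spN, if_neg (by omega), if_neg (by simp [hf])]

lemma spN_pos {i : ℕ} (h : 1 ≤ i) : 1 ≤ spN m μ i := by
  rcases ht : μ i with _ | _
  · rw [spN_false_eq h ht]; omega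
  · rw [spN_true_eq h ht]; omega

lemma spN_true_gt {i : ℕ} (h : 1 ≤ i) (ht : μ i = true) : zbn m μ < spN m μ i := by
  rw [spN_true_eq h ht]; omega

lemma spN_false_le {i : ℕ} (h1 : 1 ≤ i) (h2 : i ≤ m - 1) (hf : μ i = false) :
    spN m μ i ≤ zbn m μ := by
  rw [spN_false_eq h1 hf]
  have hlt : ((Finset.Ico 1 i).filter (fun x => μ x = false)).card < zbn m μ := by
    apply Finset.card_lt_card
    rw [Finset.ssubset_iff_of_subset]
    · exact ⟨i, by simp only [mem_filter, mem_Ico]; exact ⟨⟨h1, by omega⟩, hf⟩,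
        by simp only [mem_filter, mem_Ico]; omega⟩
    · exact Finset.filter_subset_filter _ (Finset.Ico_subset_Ico le_rfl (by omega))
  omega

lemma spN_mono_class {i i' : ℕ} (h1 : 1 ≤ i) (hlt : i < i') (he : μ i = μ i') :
    spN m μ i < spN m μ i' := by
  have hcard : ∀ b : Bool, μ i = b →
      ((Finset.Ico 1 i).filter (fun x => μ x = b)).card <
      ((Finset.Ico 1 i').filter (fun x => μ x = b)).card := by
    intro b hb
    apply Finset.card_lt_card
    rw [Finset.ssubset_iff_of_subset]
    · exact ⟨i, by simp only [mem_filter, mem_Ico]; exact ⟨⟨h1, hlt⟩, hb⟩,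
        by simp only [mem_filter, mem_Ico]; omega⟩
    · exact Finset.filter_subset_filter _ (Finset.Ico_subset_Ico le_rfl (by omega))
  rcases hb : μ i with _ | _
  · rw [spN_false_eq h1 hb, spN_false_eq (by omega) (he ▸ hb)]
    have := hcard false hb
    omega
  · rw [spN_true_eq h1 hb, spN_true_eq (by omega) (he ▸ hb)]
    have := hcard true hb
    omega

lemma spN_lt {i : ℕ} (hm : 1 ≤ m) (h2 : i ≤ m - 1) : spN m μ i < m := by
  rcases Nat.eq_zero_or_pos i with h | h
  · subst h; simp; omega
  have hm2 : 2 ≤ m := by omega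
  rcases ht : μ i with _ | _
  · have h1 := spN_false_le h h2 ht
    have h3 : zbn m μ ≤ m - 1 := by
      calc zbn m μ ≤ (Finset.Ico 1 m).card := Finset.card_filter_le _ _
        _ = m - 1 := Nat.card_Ico 1 m
    omega
  · rw [spN_true_eq h ht]
    set F := (Finset.Ico 1 m).filter (fun x => μ x = false) with hF
    set T := (Finset.Ico 1 i).filter (fun x => μ x = true) with hT
    have hd : Disjoint F T := by
      rw [Finset.disjoint_left]
      intro x hx hx'
      simp only [hF, hT, mem_filter] at hx hx'
      rw [hx.2] at hx'
      exact absurd hx'.2 (by simp)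
    have hsub : F ∪ T ⊆ (Finset.Ico 1 m).erase i := by
      intro x hx
      simp only [hF, hT, mem_filter, mem_union, mem_Ico] at hx
      simp only [Finset.mem_erase, mem_Ico]
      rcases hx with hx | hx
      · refine ⟨fun he => ?_, hx.1⟩
        rw [he, ht] at hx; exact absurd hx.2 (by simp)
      · exact ⟨by omega, by omega⟩
    have hcard : F.card + T.card ≤ m - 2 := by
      rw [← Finset.card_union_of_disjoint hd]
      calc (F ∪ T).card ≤ ((Finset.Ico 1 m).erase i).card := Finset.card_le_card hsub
        _ = m - 2 := by
            rw [Finset.card_erase_of_mem (by simp only [mem_Ico]; omega), Nat.card_Ico]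
            omega
    have : zbn m μ = F.card := rfl
    omega

lemma spN_inj {i i' : ℕ} (h2 : i ≤ m - 1) (h2' : i' ≤ m - 1)
    (he : spN m μ i = spN m μ i') : i = i' := by
  by_contra hne
  have key : ∀ a b : ℕ, a ≤ m - 1 → b ≤ m - 1 → a < b → spN m μ a ≠ spN m μ b := by
    intro a b ha hb hab
    rcases Nat.eq_zero_or_pos a with h0 | h0
    · subst h0
      have := spN_pos (m := m) (μ := μ) (i := b) (by omega)
      simp; omega
    by_cases hee : μ a = μ b
    · exact Nat.ne_of_lt (spN_mono_class h0 hab hee)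
    rcases hba : μ a with _ | _ <;> rcases hbb : μ b with _ | _
    · rw [hba, hbb] at hee; simp at hee
    · have u1 := spN_false_le (m := m) h0 ha hba
      have u2 := spN_true_gt (m := m) (i := b) (by omega) hbb
      omega
    · have u1 := spN_false_le (m := m) (i := b) (by omega) hb hbb
      have u2 := spN_true_gt (m := m) (i := a) h0 hba
      omega
    · rw [hba, hbb] at hee; simp at hee
  rcases Nat.lt_or_ge i i' with h | h
  · exact key i i' h2 h2' h he
  · exact key i' i h2' h2 (by omega) he.symm

end StablePartition

section Pass2

open Finset

variable {m n : ℕ} {C : Finset (Fin n)} {mu : Fin n → ℕ → Bool}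

open Classical in
lemma cnt_total (hm : 2 ≤ m) (hmn : m ≤ n) (hC : C.card * (m - 1) ≤ n)
    {j : Fin n} (hj : j ∈ C) {i0 : ℕ} (h1 : 1 ≤ i0) (h2 : i0 ≤ m - 1) :
    ((Finset.Ico (oj m n C j + (m - 1 - i0) + (if mu j i0 then 2 * n else 4 * n) + 1)
        (6 * n)).filter (fun u => fires m n C mu j u)).card + 1
      = spN m (mu j) i0 := by
  have hn : 0 < n := by omega
  have ho : oj m n C j < n := oj_lt hn
  rcases hmu : mu j i0 with _ | _
  · -- zero-marked: picked up in sweep 3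
    rw [if_neg (by simp [hmu])]
    have hS : ((Finset.Ico (oj m n C j + (m - 1 - i0) + 4 * n + 1) (6 * n)).filter
          (fun u => fires m n C mu j u))
        = ((Finset.Ico 1 i0).filter (fun x => mu j x = false)).image
            (fun x => 4 * n + oj m n C j + (m - 1 - x)) := by
      ext u
      simp only [Finset.mem_filter, Finset.mem_Ico, Finset.mem_image]
      constructor
      · rintro ⟨⟨hu1, hu2⟩, -, s, hs, hcase⟩
        rcases hcase with h | ⟨h, hmu2⟩ | ⟨h, hmu3⟩
        · omega
        · omega
        · exact ⟨m - 1 - s, ⟨⟨by omega, by omega⟩,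
            hmu3⟩, by omega⟩
      · rintro ⟨x, ⟨⟨hx1, hx2⟩, hxf⟩, rfl⟩
        refine ⟨⟨by omega, by omega⟩, ?_⟩
        exact fires_sweep3 (m := m) (n := n) (C := C) (mu := mu) hj (s := m - 1 - x)
          (by omega) (by rw [show m - 1 - (m - 1 - x) = x by omega]; exact hxf)
    rw [hS, Finset.card_image_of_injOn (by
      intro x hx y hy hxy
      simp only [Finset.coe_filter, Finset.mem_Ico, Set.mem_setOf_eq] at hx hy
      have hxy' : 4 * n + oj m n C j + (m - 1 - x) = 4 * n + oj m n C j + (m - 1 - y) := hxy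
      omega)]
    rw [spN_false_eq h1 hmu]
    omega
  · -- one-marked: picked up in sweep 2
    rw [if_pos (by simp [hmu])]
    have hS : ((Finset.Ico (oj m n C j + (m - 1 - i0) + 2 * n + 1) (6 * n)).filter
          (fun u => fires m n C mu j u))
        = (((Finset.Ico 1 i0).filter (fun x => mu j x = true)).image
            (fun x => 2 * n + oj m n C j + (m - 1 - x))) ∪
          (((Finset.Ico 1 m).filter (fun x => mu j x = false)).image
            (fun x => 4 * n + oj m n C j + (m - 1 - x))) := by
      ext u
      simp only [Finset.mem_filter, Finset.mem_Ico, Finset.mem_image, Finset.mem_union]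
      constructor
      · rintro ⟨⟨hu1, hu2⟩, -, s, hs, hcase⟩
        rcases hcase with h | ⟨h, hmu2⟩ | ⟨h, hmu3⟩
        · omega
        · exact Or.inl ⟨m - 1 - s, ⟨⟨by omega, by omega⟩,
            hmu2⟩, by omega⟩
        · exact Or.inr ⟨m - 1 - s, ⟨⟨by omega, by omega⟩,
            hmu3⟩, by omega⟩
      · rintro (⟨x, ⟨⟨hx1, hx2⟩, hxf⟩, rfl⟩ | ⟨x, ⟨⟨hx1, hx2⟩, hxf⟩, rfl⟩)
        · refine ⟨⟨by omega, by omega⟩, ?_⟩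
          exact fires_sweep2 (m := m) (n := n) (C := C) (mu := mu) hj (s := m - 1 - x)
            (by omega) (by rw [show m - 1 - (m - 1 - x) = x by omega]; exact hxf)
        · refine ⟨⟨by omega, by omega⟩, ?_⟩
          exact fires_sweep3 (m := m) (n := n) (C := C) (mu := mu) hj (s := m - 1 - x)
            (by omega) (by rw [show m - 1 - (m - 1 - x) = x by omega]; exact hxf)
    rw [hS, Finset.card_union_of_disjoint (by
      rw [Finset.disjoint_left]
      rintro u hu hu'
      simp only [Finset.mem_image, Finset.mem_filter, Finset.mem_Ico] at hu hu'
      obtain ⟨x, hx, hxe⟩ := hu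
      obtain ⟨y, hy, hye⟩ := hu'
      have hxe' : 2 * n + oj m n C j + (m - 1 - x) = u := hxe
      have hye' : 4 * n + oj m n C j + (m - 1 - y) = u := hye
      have h1' := hx.1
      have h2' := hy.1
      omega)]
    rw [Finset.card_image_of_injOn (by
      intro x hx y hy hxy
      simp only [Finset.coe_filter, Finset.mem_Ico, Set.mem_setOf_eq] at hx hy
      have hxy' : 2 * n + oj m n C j + (m - 1 - x) = 2 * n + oj m n C j + (m - 1 - y) := hxy
      omega),
      Finset.card_image_of_injOn (by
      intro x hx y hy hxy
      simp only [Finset.coe_filter, Finset.mem_Ico, Set.mem_setOf_eq] at hx hy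
      have hxy' : 4 * n + oj m n C j + (m - 1 - x) = 4 * n + oj m n C j + (m - 1 - y) := hxy
      omega)]
    rw [spN_true_eq h1 hmu]
    have hz : zbn m (mu j) = ((Finset.Ico 1 m).filter (fun x => mu j x = false)).card := rfl
    omega

lemma natCast_ne_zero {k r : ℕ} [NeZero k] (h1 : 1 ≤ r) (h2 : r < k) :
    ((r : ℕ) : Fin k) ≠ 0 := by
  intro he
  have hv := congrArg Fin.val he
  rw [Fin.val_natCast, Nat.mod_eq_of_lt h2] at hv
  simp at hv
  omega

lemma sigma_fix [NeZero m] [NeZero n] {j : Fin n} (hj : j ∉ C) {i : Fin m} (hi : i ≠ 0) :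
    netPerm (passWord m n C mu) (i, j) = (i, j) := by
  rw [passWord]
  exact netPerm_flatMap _ (6 * n) _ (fun _ => (i, j)) rfl
    (fun t _ => tick_fix (fun hf => hj (fires_mem hf)) hi)

open Classical in
lemma sigma_body [NeZero m] [NeZero n] (hm : 2 ≤ m) (hmn : m ≤ n)
    (hC : C.card * (m - 1) ≤ n) {j : Fin n} (hj : j ∈ C) {i0 : ℕ}
    (h1 : 1 ≤ i0) (h2 : i0 ≤ m - 1) :
    netPerm (passWord m n C mu) ((↑i0 : Fin m), j) = ((↑(spN m (mu j) i0) : Fin m), j) := by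
  have hn : 0 < n := by omega
  have ho : oj m n C j < n := oj_lt hn
  have hw2 : 2 * n ≤ (if mu j i0 then 2 * n else 4 * n) := by split <;> omega
  have hw4 : (if mu j i0 then 2 * n else 4 * n) ≤ 4 * n := by split <;> omega
  set o := oj m n C j with ho_def
  set ts := o + (m - 1 - i0) with hts_def
  set pk := ts + (if mu j i0 then 2 * n else 4 * n) with hpk_def
  set cnt : ℕ → ℕ :=
    fun u => ((Finset.Ico (pk + 1) u).filter (fun t => fires m n C mu j t)).card with hcnt_def
  have htot : cnt (6 * n) + 1 = spN m (mu j) i0 := cnt_total hm hmn hC hj h1 h2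
  have hsp_lt : spN m (mu j) i0 < m := spN_lt (by omega) h2
  have hcnt_le : ∀ u, u ≤ 6 * n → cnt u ≤ m - 2 := by
    intro u hu
    have hmono : cnt u ≤ cnt (6 * n) :=
      Finset.card_le_card (Finset.filter_subset_filter _
        (Finset.Ico_subset_Ico le_rfl hu))
    omega
  set f : ℕ → Fin m × Fin n := fun t =>
    if t ≤ o then ((↑i0 : Fin m), j)
    else if t ≤ ts then ((↑(i0 + (t - o)) : Fin m), j)
    else if t ≤ pk then ((0 : Fin m), j + ((t - ts : ℕ) : Fin n))
    else ((↑(1 + cnt t) : Fin m), j) with hf_def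
  have hstep : ∀ t < 6 * n, netPerm (tickWord m n C mu t) (f t) = f (t + 1) := by
    intro t ht6
    by_cases hA : t + 1 ≤ o
    · have hft : f t = ((↑i0 : Fin m), j) := by simp only [hf_def, if_pos (by omega : t ≤ o)]
      have hft1 : f (t + 1) = ((↑i0 : Fin m), j) := by simp only [hf_def, if_pos hA]
      rw [hft, hft1]
      exact tick_fix (fun hfire => by have := fires_lb hfire; omega)
        (natCast_ne_zero h1 (by omega))
    · by_cases hB : t < ts
      · have hto : o ≤ t := by omega
        have hft : f t = ((↑(i0 + (t - o)) : Fin m), j) := by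
          by_cases h : t ≤ o
          · have he : t = o := by omega
            subst he
            simp [hf_def]
          · simp only [hf_def, if_neg h, if_pos (by omega : t ≤ ts)]
        have hfire : fires m n C mu j t := by
          have hf1 := fires_sweep1 (m := m) (n := n) (C := C) (mu := mu) hj
            (s := t - o) (by omega)
          rwa [show o + (t - o) = t by omega] at hf1
        rw [hft, tick_down hfire (by omega : i0 + (t - o) + 1 < m)]
        have hft1 : f (t + 1) = ((↑(i0 + (t + 1 - o)) : Fin m), j) := by
          simp only [hf_def, if_neg (by omega : ¬ t + 1 ≤ o), if_pos (by omega : t + 1 ≤ ts)]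
        rw [hft1, show i0 + (t - o) + 1 = i0 + (t + 1 - o) by omega]
      · by_cases hCc : t = ts
        · subst hCc
          have hft : f ts = ((↑(m - 1) : Fin m), j) := by
            by_cases h : ts ≤ o
            · have he : i0 = m - 1 := by omega
              simp only [hf_def, if_pos h, he]
            · simp only [hf_def, if_neg h, if_pos le_rfl,
                show i0 + (ts - o) = m - 1 by omega]
          have hfire : fires m n C mu j ts := by
            have hf1 := fires_sweep1 (m := m) (n := n) (C := C) (mu := mu) hj
              (s := m - 1 - i0) (by omega)
            rwa [← hts_def] at hf1
          rw [hft, tick_wrap hfire]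
          have hft1 : f (ts + 1) = ((0 : Fin m), j + ((1 : ℕ) : Fin n)) := by
            simp only [hf_def, if_neg (by omega : ¬ ts + 1 ≤ o),
              if_neg (by omega : ¬ ts + 1 ≤ ts), if_pos (by omega : ts + 1 ≤ pk),
              Nat.add_sub_cancel_left]
          rw [hft1]
          norm_num
        · by_cases hD : t < pk
          · have hft : f t = ((0 : Fin m), j + ((t - ts : ℕ) : Fin n)) := by
              simp only [hf_def, if_neg (by omega : ¬ t ≤ o), if_neg (by omega : ¬ t ≤ ts),
                if_pos (by omega : t ≤ pk)]
            have hnf : ¬ fires m n C mu (j + ((t - ts : ℕ) : Fin n)) t := by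
              intro hfire
              have hts_eq : t - ts = t - (oj m n C j + (m - 1 - i0)) := by omega
              rw [hts_eq] at hfire
              exact no_fire_riding hm hmn hC hj h1 h2 (by omega) (by omega) hfire
            rw [hft, tick_ride hnf]
            have hft1 : f (t + 1) = ((0 : Fin m), j + ((t + 1 - ts : ℕ) : Fin n)) := by
              simp only [hf_def, if_neg (by omega : ¬ t + 1 ≤ o),
                if_neg (by omega : ¬ t + 1 ≤ ts), if_pos (by omega : t + 1 ≤ pk)]
            rw [hft1, show t + 1 - ts = (t - ts) + 1 by omega]
            push_cast
            rw [add_assoc]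
          · by_cases hE : t = pk
            · subst hE
              have hft : f pk = ((0 : Fin m), j) := by
                simp only [hf_def, if_neg (by omega : ¬ pk ≤ o), if_neg (by omega : ¬ pk ≤ ts),
                  if_pos le_rfl, show pk - ts = (if mu j i0 then 2 * n else 4 * n) by omega]
                rcases hmu : mu j i0 with _ | _ <;> simp only [hmu, if_neg, if_pos,
                  Bool.false_eq_true, ite_false, ite_true] <;>
                  · congr 1
                    push_cast [Fin.natCast_self]
                    ring
              have hfire : fires m n C mu j pk := by
                rcases hmu : mu j i0 with _ | _
                · have hf1 := fires_sweep3 (m := m) (n := n) (C := C) (mu := mu) hj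
                    (s := m - 1 - i0) (by omega)
                    (by rw [show m - 1 - (m - 1 - i0) = i0 by omega]; exact hmu)
                  rwa [show 4 * n + oj m n C j + (m - 1 - i0) = pk by
                    rw [hpk_def, hts_def, ho_def]; simp [hmu]; omega] at hf1
                · have hf1 := fires_sweep2 (m := m) (n := n) (C := C) (mu := mu) hj
                    (s := m - 1 - i0) (by omega)
                    (by rw [show m - 1 - (m - 1 - i0) = i0 by omega]; exact hmu)
                  rwa [show 2 * n + oj m n C j + (m - 1 - i0) = pk by
                    rw [hpk_def, hts_def, ho_def]; simp [hmu]; omega] at hf1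
              have h0c : ((0 : Fin m)) = ((0 : ℕ) : Fin m) := by norm_num
              rw [hft, h0c, tick_down hfire (by omega : 0 + 1 < m)]
              have hft1 : f (pk + 1) = ((↑(1 + cnt (pk + 1)) : Fin m), j) := by
                simp only [hf_def, if_neg (by omega : ¬ pk + 1 ≤ o),
                  if_neg (by omega : ¬ pk + 1 ≤ ts), if_neg (by omega : ¬ pk + 1 ≤ pk)]
              have hc0 : cnt (pk + 1) = 0 := by
                simp [hcnt_def]
              rw [hft1, hc0]
            · -- counting phase : pk < t
              have hpt : pk + 1 ≤ t := by omega
              have hft : f t = ((↑(1 + cnt t) : Fin m), j) := by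
                simp only [hf_def, if_neg (by omega : ¬ t ≤ o),
                  if_neg (by omega : ¬ t ≤ ts), if_neg (by omega : ¬ t ≤ pk)]
              have hft1 : f (t + 1) = ((↑(1 + cnt (t + 1)) : Fin m), j) := by
                simp only [hf_def, if_neg (by omega : ¬ t + 1 ≤ o),
                  if_neg (by omega : ¬ t + 1 ≤ ts), if_neg (by omega : ¬ t + 1 ≤ pk)]
              have hsucc : cnt (t + 1) = cnt t + (if fires m n C mu j t then 1 else 0) := by
                simp only [hcnt_def]
                rw [show Finset.Ico (pk + 1) (t + 1) = insert t (Finset.Ico (pk + 1) t) by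
                  ext x; simp only [Finset.mem_Ico, Finset.mem_insert]; omega]
                rw [Finset.filter_insert]
                split
                · rw [Finset.card_insert_of_notMem (by simp)]
                · rfl
              have hcle1 : cnt (t + 1) ≤ m - 2 := hcnt_le (t + 1) (by omega)
              have hcle0 : cnt t ≤ m - 2 := hcnt_le t (by omega)
              by_cases hfire : fires m n C mu j t
              · rw [if_pos hfire] at hsucc
                rw [hft, tick_down hfire (by omega : 1 + cnt t + 1 < m), hft1]
                rw [show 1 + cnt t + 1 = 1 + cnt (t + 1) by omega]
              · rw [if_neg hfire] at hsucc
                rw [hft, tick_fix hfire (natCast_ne_zero (by omega) (by omega)), hft1, hsucc]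
                simp
  have h0 : f 0 = ((↑i0 : Fin m), j) := by
    simp only [hf_def, if_pos (Nat.zero_le o)]
  rw [passWord, netPerm_flatMap _ (6 * n) _ f h0 hstep]
  have hfin : f (6 * n) = ((↑(1 + cnt (6 * n)) : Fin m), j) := by
    simp only [hf_def, if_neg (by omega : ¬ 6 * n ≤ o), if_neg (by omega : ¬ 6 * n ≤ ts),
      if_neg (by omega : ¬ 6 * n ≤ pk)]
  rw [hfin, show 1 + cnt (6 * n) = spN m (mu j) i0 by omega]


open Classical in
lemma invert_pass [NeZero m] [NeZero n] (hm : 2 ≤ m) (hmn : m ≤ n)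
    (hC : C.card * (m - 1) ≤ n) {j : Fin n} (hj : j ∈ C) (mu : Fin n → ℕ → Bool)
    (i : Fin m) (hi : 1 ≤ (i : ℕ)) :
    ∃ x : Fin m, 1 ≤ (x : ℕ) ∧ (netPerm (passWord m n C mu))⁻¹ (i, j) = (x, j) ∧
      spN m (mu j) (x : ℕ) = (i : ℕ) := by
  have hglt : ∀ z : Fin m, spN m (mu j) (z : ℕ) < m :=
    fun z => spN_lt (by omega) (by have := z.isLt; omega)
  set g : Fin m → Fin m := fun z => ⟨spN m (mu j) (z : ℕ), hglt z⟩ with hg_def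
  have hginj : Function.Injective g := by
    intro a b h
    have hv := congrArg Fin.val h
    simp only [hg_def] at hv
    exact Fin.ext (spN_inj (by have := a.isLt; omega) (by have := b.isLt; omega) hv)
  obtain ⟨x, hx⟩ := Finite.surjective_of_injective hginj i
  have hx1 : 1 ≤ (x : ℕ) := by
    by_contra h0
    have hx0 : (x : ℕ) = 0 := by omega
    have : (g x : ℕ) = 0 := by simp [hg_def, hx0]
    rw [hx] at this
    omega
  have hbody : netPerm (passWord m n C mu) (x, j) = (i, j) := by
    have hxc : ((↑(x : ℕ) : Fin m)) = x := Fin.cast_val_eq_self x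
    have := sigma_body (mu := mu) hm hmn hC hj hx1 (by have := x.isLt; omega)
    rw [hxc] at this
    rw [this]
    have : ((↑(spN m (mu j) (x : ℕ)) : Fin m)) = i := by
      rw [← hx]
      exact Fin.ext (by simp [hg_def, Fin.val_natCast, Nat.mod_eq_of_lt (hglt x)])
    rw [this]
  refine ⟨x, hx1, ?_, ?_⟩
  · conv_lhs => rw [← hbody]
    simp [Equiv.Perm.inv_def]
  · have hv := congrArg Fin.val hx
    simpa [hg_def] using hv

open Classical in
lemma radix [NeZero m] [NeZero n] (hm : 2 ≤ m) (hmn : m ≤ n) (hC : C.card * (m - 1) ≤ n)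
    (A : (Fin m × Fin n) ≃ Fin (m * n)) (R : ℕ) :
    ∃ L : List (Equiv.Perm (Fin m × Fin n)),
      (∀ g ∈ L, g ∈ unitRotations m n) ∧
      L.length ≤ (6 * n + C.card * (3 * m)) * R ∧
      (∀ j : Fin n, j ∉ C → ∀ i : Fin m, 1 ≤ (i : ℕ) → applySeq A L (i, j) = A (i, j)) ∧
      (∀ j ∈ C, ∀ i : Fin m, 1 ≤ (i : ℕ) →
        ∃ i' : Fin m, 1 ≤ (i' : ℕ) ∧ applySeq A L (i, j) = A (i', j)) ∧
      (∀ j ∈ C, ∀ i i' : Fin m, 1 ≤ (i : ℕ) → (i : ℕ) ≤ (i' : ℕ) →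
        ((applySeq A L (i, j) : ℕ) / n) % 2 ^ R ≤ ((applySeq A L (i', j) : ℕ) / n) % 2 ^ R) := by
  induction R with
  | zero =>
      refine ⟨[], by simp, by simp, ?_, ?_, ?_⟩
      · intro j hj i hi; rfl
      · intro j hj i hi; exact ⟨i, hi, rfl⟩
      · intro j hj i i' hi hii'; simp [Nat.mod_one]
  | succ R ih =>
      obtain ⟨L, hmem, hlen, hI1, hI2, hI3⟩ := ih
      set B := applySeq A L with hB_def
      set mu : Fin n → ℕ → Bool :=
        fun j x => Nat.testBit ((B ((↑x : Fin m), j) : ℕ) / n) R with hmu_def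
      have happ : ∀ p, applySeq A (L ++ passWord m n C mu) p
          = B ((netPerm (passWord m n C mu))⁻¹ p) := by
        intro p
        rw [applySeq_append, applySeq_apply]
      refine ⟨L ++ passWord m n C mu, ?_, ?_, ?_, ?_, ?_⟩
      · intro g hg
        rcases List.mem_append.mp hg with h | h
        · exact hmem g h
        · exact passWord_mem h
      · rw [List.length_append]
        have := passWord_length (m := m) (n := n) (C := C) (mu := mu) hm
        calc L.length + (passWord m n C mu).length
            ≤ (6 * n + C.card * (3 * m)) * R + (6 * n + C.card * (3 * m)) := by omega
          _ = (6 * n + C.card * (3 * m)) * (R + 1) := by ring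
      · intro j hj i hi
        rw [happ]
        have hfix : netPerm (passWord m n C mu) (i, j) = (i, j) :=
          sigma_fix hj (by intro h0; rw [h0] at hi; simp at hi)
        have hfix' : (netPerm (passWord m n C mu))⁻¹ (i, j) = (i, j) := by
          conv_lhs => rw [← hfix]
          simp [Equiv.Perm.inv_def]
        rw [hfix']
        exact hI1 j hj i hi
      · intro j hj i hi
        obtain ⟨x, hx1, hxe, -⟩ := invert_pass hm hmn hC hj mu i hi
        rw [happ, hxe]
        exact hI2 j hj x hx1
      · intro j hj i i' hi hii'
        obtain ⟨x, hx1, hxe, hxs⟩ := invert_pass hm hmn hC hj mu i hi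
        obtain ⟨x', hx1', hxe', hxs'⟩ := invert_pass hm hmn hC hj mu i' (by omega)
        rw [happ, happ, hxe, hxe']
        have hxm : (x : ℕ) ≤ m - 1 := by have := x.isLt; omega
        have hxm' : (x' : ℕ) ≤ m - 1 := by have := x'.isLt; omega
        have hmux : mu j (x : ℕ) = Nat.testBit ((B (x, j) : ℕ) / n) R := by
          simp [hmu_def, Fin.cast_val_eq_self]
        have hmux' : mu j (x' : ℕ) = Nat.testBit ((B (x', j) : ℕ) / n) R := by
          simp [hmu_def, Fin.cast_val_eq_self]
        have hdec : ∀ a : ℕ, a % 2 ^ (R + 1) = a % 2 ^ R + 2 ^ R * (a / 2 ^ R % 2) := by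
          intro a
          rw [pow_succ, Nat.mod_mul]
        have hb01 : ∀ a : ℕ, a / 2 ^ R % 2 = if Nat.testBit a R then 1 else 0 := by
          intro a
          rcases h : Nat.testBit a R
          · rw [Nat.testBit_eq_decide_div_mod_eq, decide_eq_false_iff_not] at h
            have h2 : a / 2 ^ R % 2 < 2 := Nat.mod_lt _ (by norm_num)
            simp
            omega
          · rw [Nat.testBit_eq_decide_div_mod_eq, decide_eq_true_eq] at h
            simp [h]
        have hpow : 0 < 2 ^ R := Nat.pow_pos (n := R) (by norm_num)
        rw [hdec, hdec, hb01, hb01, ← hmux, ← hmux']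
        rcases hbx : mu j (x : ℕ) with _ | _ <;> rcases hbx' : mu j (x' : ℕ) with _ | _
        · have hxx : (x : ℕ) ≤ (x' : ℕ) := by
            by_contra h
            have := spN_mono_class (m := m) hx1' (by omega : (x' : ℕ) < (x : ℕ))
              (hbx'.trans hbx.symm)
            omega
          have hold := hI3 j hj x x' hx1 hxx
          simp
          omega
        · have hlt : ((B (x, j) : ℕ) / n) % 2 ^ R < 2 ^ R := Nat.mod_lt _ hpow
          simp
          omega
        · exfalso
          have u1 := spN_true_gt (m := m) hx1 hbx
          have u2 := spN_false_le (m := m) hx1' hxm' hbx'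
          omega
        · have hxx : (x : ℕ) ≤ (x' : ℕ) := by
            by_contra h
            have := spN_mono_class (m := m) hx1' (by omega : (x' : ℕ) < (x : ℕ))
              (hbx'.trans hbx.symm)
            omega
          have hold := hI3 j hj x x' hx1 hxx
          simp
          omega

end Pass2

end Torus

open Fin.CommRing

/- RadixSortBodies: body-sorts the columns with index in a set 𝒞 with |𝒞|(m-1) ≤ n,
using O((n + |𝒞| m) log m) rotations, leaving the bodies of all other columns unchanged. -/
theorem radixSortBodies_bound :
    ∃ C : ℕ, 0 < C ∧ ∀ m n : ℕ, 2 ≤ m → m ≤ n →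
      ∀ A : (Fin m × Fin n) ≃ Fin (m * n),
        (∀ j : Fin n, BodyOfColumnIsFull A j) →
        ∀ 𝒞 : Finset (Fin n), 𝒞.card * (m - 1) ≤ n →
          ∃ L : List (Equiv.Perm (Fin m × Fin n)),
            (∀ g ∈ L, g ∈ unitRotations m n) ∧
            L.length ≤ C * (n + 𝒞.card * m) * Nat.clog 2 m ∧
            (∀ j ∈ 𝒞, BodySorted (applySeq A L) j) ∧
            (∀ j : Fin n, j ∉ 𝒞 → ∀ i : Fin m, 1 ≤ (i : ℕ) →
              (applySeq A L) (i, j) = A (i, j)) := by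
  refine ⟨6, by norm_num, ?_⟩
  intro m n hm hmn A hA 𝒞 h𝒞
  haveI : NeZero m := ⟨by omega⟩
  haveI : NeZero n := ⟨by omega⟩
  set R := Nat.clog 2 m with hR_def
  have hpow : m ≤ 2 ^ R := Nat.le_pow_clog (by norm_num) m
  obtain ⟨L, hmem, hlen, hI1, hI2, hI3⟩ := Torus.radix (C := 𝒞) hm hmn h𝒞 A R
  refine ⟨L, hmem, ?_, ?_, fun j hj i hi => hI1 j hj i hi⟩
  · calc L.length ≤ (6 * n + 𝒞.card * (3 * m)) * R := hlen
      _ ≤ 6 * (n + 𝒞.card * m) * R := Nat.mul_le_mul_right R (by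
          have h3 : 𝒞.card * (3 * m) = 3 * (𝒞.card * m) := by ring
          have h6 : 6 * (n + 𝒞.card * m) = 6 * n + 6 * (𝒞.card * m) := by ring
          omega)
  · intro j hj i hi
    set B := applySeq A L with hB
    have hn : 0 < n := by omega
    have hmod : ∀ i2 : Fin m, 1 ≤ (i2 : ℕ) →
        ((B (i2, j)) : ℕ) % n = (j : ℕ) ∧ 1 ≤ ((B (i2, j)) : ℕ) / n := by
      intro i2 hi2
      obtain ⟨i', hi', he⟩ := hI2 j hj i2 hi2
      rw [he]
      exact (hA j (A (i', j))).mp ⟨i', hi', rfl⟩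
    have hdivlt : ∀ i2 : Fin m, ((B (i2, j)) : ℕ) / n < m := by
      intro i2
      have hlt := (B (i2, j)).isLt
      exact (Nat.div_lt_iff_lt_mul hn).mpr hlt
    have hstrict : ∀ r r' : ℕ, 1 ≤ r → r < r' → r' ≤ m - 1 →
        ((B ((↑r : Fin m), j)) : ℕ) / n < ((B ((↑r' : Fin m), j)) : ℕ) / n := by
      intro r r' h1 h2 h3
      have hv : (((↑r : Fin m)) : ℕ) = r := by
        rw [Fin.val_natCast]; exact Nat.mod_eq_of_lt (by omega)
      have hv' : (((↑r' : Fin m)) : ℕ) = r' := by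
        rw [Fin.val_natCast]; exact Nat.mod_eq_of_lt (by omega)
      have hle := hI3 j hj (↑r) (↑r') (by rw [hv]; omega) (by rw [hv, hv']; omega)
      have e1 : ((B ((↑r : Fin m), j)) : ℕ) / n % 2 ^ R = ((B ((↑r : Fin m), j)) : ℕ) / n :=
        Nat.mod_eq_of_lt (lt_of_lt_of_le (hdivlt _) hpow)
      have e2 : ((B ((↑r' : Fin m), j)) : ℕ) / n % 2 ^ R = ((B ((↑r' : Fin m), j)) : ℕ) / n :=
        Nat.mod_eq_of_lt (lt_of_lt_of_le (hdivlt _) hpow)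
      rw [e1, e2] at hle
      rcases Nat.lt_or_ge (((B ((↑r : Fin m), j)) : ℕ) / n) (((B ((↑r' : Fin m), j)) : ℕ) / n)
        with h | h
      · exact h
      exfalso
      have heq : ((B ((↑r : Fin m), j)) : ℕ) / n = ((B ((↑r' : Fin m), j)) : ℕ) / n := by omega
      have hm1 := (hmod (↑r) (by rw [hv]; omega)).1
      have hm2 := (hmod (↑r') (by rw [hv']; omega)).1
      have d1 := Nat.div_add_mod (((B ((↑r : Fin m), j))) : ℕ) n
      have d2 := Nat.div_add_mod (((B ((↑r' : Fin m), j))) : ℕ) n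
      have hveq : ((B ((↑r : Fin m), j)) : ℕ) = ((B ((↑r' : Fin m), j)) : ℕ) := by
        rw [← d1, ← d2, heq, hm1, hm2]
      have hBeq : B ((↑r : Fin m), j) = B ((↑r' : Fin m), j) := Fin.ext hveq
      have hpe := B.injective hBeq
      have : ((↑r : Fin m)) = ((↑r' : Fin m)) := (Prod.ext_iff.mp hpe).1
      have := congrArg Fin.val this
      rw [hv, hv'] at this
      omega
    have hup : ∀ r : ℕ, 1 ≤ r → r ≤ m - 1 → r ≤ ((B ((↑r : Fin m), j)) : ℕ) / n := by
      intro r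
      induction r with
      | zero => intro h; omega
      | succ r ih =>
          intro h1 h2
          rcases Nat.eq_zero_or_pos r with h0 | h0
          · subst h0
            have hv : (((↑(1 : ℕ) : Fin m)) : ℕ) = 1 := by
              rw [Fin.val_natCast]; exact Nat.mod_eq_of_lt (by omega)
            have := (hmod (↑(1 : ℕ)) (by omega)).2
            simpa using this
          · have hu := ih (by omega) (by omega)
            have hs := hstrict r (r + 1) (by omega) (by omega) h2
            omega
    have hdown : ∀ d : ℕ, d ≤ m - 2 → ((B ((↑(m - 1 - d) : Fin m), j)) : ℕ) / n ≤ m - 1 - d := by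
      intro d
      induction d with
      | zero =>
          intro h
          have := hdivlt (↑(m - 1 - 0))
          omega
      | succ d ih =>
          intro h
          have h2 := ih (by omega)
          have hs := hstrict (m - 1 - (d + 1)) (m - 1 - d) (by omega) (by omega) (by omega)
          omega
    have hiv : (i : ℕ) ≤ m - 1 := by have := i.isLt; omega
    have hcast : ((↑((i : ℕ)) : Fin m)) = i := Fin.cast_val_eq_self i
    have hTi : ((B (i, j)) : ℕ) / n = (i : ℕ) := by
      have u := hup (i : ℕ) hi hiv
      have d := hdown (m - 1 - (i : ℕ)) (by omega)
      rw [show m - 1 - (m - 1 - (i : ℕ)) = (i : ℕ) by omega] at d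
      rw [hcast] at u d
      omega
    have hm2 := (hmod i hi).1
    have hdm := Nat.div_add_mod ((B (i, j)) : ℕ) n
    rw [hTi, hm2] at hdm
    rw [← hdm]
    ring
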